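/- Let β > 0, δ₀ > 0, and let q : (0,δ₀] → ℝ be a C¹ function for which there exist constants 0 < C₁ ≤ C₂ with C₁x^{−β} ≤ q(x) ≤ C₂x^{−β} and C₁x^{−β−1} ≤ −q′(x) ≤ C₂x^{−β−1} for all x ∈ (0,δ₀]. Then q is strictly decreasing on (0,δ₀], it has an inverse function q^{−1} : [m₀,∞) → (0,δ₀] where m₀ = q(δ₀), and there exist constants 0 < D₁ ≤ D₂ such that: D₁t^{−1/β} ≤ q^{−1}(t) ≤ D₂t^{−1/β} and D₁t^{−1/β−1} ≤ −(q^{−1})′(t) ≤ D₂t^{−1/β−1} for all t ≥ m₀; and for all s, t with m₀ ≤ s < t: D₁·t^{−1/β−1}·(t − s) ≤ q^{−1}(s) − q^{−1}(t) ≤ D₂·s^{−1/β−1}·(t − s). -/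

import Mathlib

open Set Filter Real Topology

private lemma aux_pow {β s C : ℝ} (hβ : 0 < β) (hs : 0 < s) (hC : 0 < C) :
    (C ^ (1/β) * s ^ (-(1/β))) ^ (β+1) = C ^ ((β+1)/β) * s ^ (-(1/β)-1) := by
  rw [Real.mul_rpow (Real.rpow_nonneg hC.le _) (Real.rpow_nonneg hs.le _),
    ← Real.rpow_mul hC.le, ← Real.rpow_mul hs.le,
    show 1/β*(β+1) = (β+1)/β by field_simp,
    show (-(1/β))*(β+1) = -(1/β)-1 by field_simp; ring]

private lemma aux_le {β t C x : ℝ} (hβ : 0 < β) (ht : 0 < t) (hC : 0 < C) (hx : 0 < x)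
    (h : t ≤ C * x ^ (-β)) : x ≤ C ^ (1/β) * t ^ (-(1/β)) := by
  have hxb : 0 < x ^ β := Real.rpow_pos_of_pos hx β
  have hR : (C ^ (1/β) * t ^ (-(1/β))) ^ β = C / t := by
    rw [Real.mul_rpow (Real.rpow_nonneg hC.le _) (Real.rpow_nonneg ht.le _),
      ← Real.rpow_mul hC.le, ← Real.rpow_mul ht.le,
      show 1/β*β = 1 by field_simp, show (-(1/β))*β = -1 by field_simp,
      Real.rpow_one, Real.rpow_neg_one, div_eq_mul_inv]
  rw [← Real.rpow_le_rpow_iff hx.le (by positivity) hβ, hR]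
  rw [Real.rpow_neg hx.le, ← div_eq_mul_inv] at h
  have h' : t * x ^ β ≤ C := (le_div_iff₀ hxb).mp h
  rw [le_div_iff₀ ht, mul_comm]
  exact h'

private lemma aux_ge {β t C x : ℝ} (hβ : 0 < β) (ht : 0 < t) (hC : 0 < C) (hx : 0 < x)
    (h : C * x ^ (-β) ≤ t) : C ^ (1/β) * t ^ (-(1/β)) ≤ x := by
  have hxb : 0 < x ^ β := Real.rpow_pos_of_pos hx β
  have hR : (C ^ (1/β) * t ^ (-(1/β))) ^ β = C / t := by
    rw [Real.mul_rpow (Real.rpow_nonneg hC.le _) (Real.rpow_nonneg ht.le _),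
      ← Real.rpow_mul hC.le, ← Real.rpow_mul ht.le,
      show 1/β*β = 1 by field_simp, show (-(1/β))*β = -1 by field_simp,
      Real.rpow_one, Real.rpow_neg_one, div_eq_mul_inv]
  rw [← Real.rpow_le_rpow_iff (by positivity) hx.le hβ, hR]
  rw [Real.rpow_neg hx.le, ← div_eq_mul_inv] at h
  have h' : C ≤ t * x ^ β := (div_le_iff₀ hxb).mp h
  rw [div_le_iff₀ ht, mul_comm]
  exact h'

/-- Proposition `druga`. If `q ≃₁ x^{-β}` near `0` (in the sense of
two-sided bounds on `q` and `-q′`), then `q` is strictly decreasing, has an inverse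
on `[m₀,∞)` with `q⁻¹(t) ≃₁ t^{-1/β}` as `t → ∞`, together with the two-sided
mean-value estimate for differences of `q⁻¹`. -/
theorem inverse_function_asymptotics
    (β δ₀ : ℝ) (hβ : 0 < β) (hδ₀ : 0 < δ₀)
    (q : ℝ → ℝ)
    (hq_smooth : ContDiffOn ℝ 1 q (Set.Ioc 0 δ₀))
    (C₁ C₂ : ℝ) (hC₁ : 0 < C₁) (hC₁₂ : C₁ ≤ C₂)
    (hq_bound : ∀ x ∈ Set.Ioc 0 δ₀, C₁ * x ^ (-β) ≤ q x ∧ q x ≤ C₂ * x ^ (-β))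
    (hq'_bound : ∀ x ∈ Set.Ioc 0 δ₀,
      C₁ * x ^ (-β - 1) ≤ -derivWithin q (Set.Ioc 0 δ₀) x ∧
      -derivWithin q (Set.Ioc 0 δ₀) x ≤ C₂ * x ^ (-β - 1)) :
    StrictAntiOn q (Set.Ioc 0 δ₀) ∧
    ∃ qi : ℝ → ℝ,
      (∀ x ∈ Set.Ioc 0 δ₀, qi (q x) = x) ∧
      (∀ t ≥ q δ₀, qi t ∈ Set.Ioc 0 δ₀ ∧ q (qi t) = t) ∧
      ∃ D₁ D₂ : ℝ, 0 < D₁ ∧ D₁ ≤ D₂ ∧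
        (∀ t ≥ q δ₀,
          D₁ * t ^ (-(1 / β)) ≤ qi t ∧ qi t ≤ D₂ * t ^ (-(1 / β)) ∧
          D₁ * t ^ (-(1 / β) - 1) ≤ -derivWithin qi (Set.Ici (q δ₀)) t ∧
          -derivWithin qi (Set.Ici (q δ₀)) t ≤ D₂ * t ^ (-(1 / β) - 1)) ∧
        ∀ u t : ℝ, q δ₀ ≤ u → u < t →
          D₁ * t ^ (-(1 / β) - 1) * (t - u) ≤ qi u - qi t ∧
          qi u - qi t ≤ D₂ * u ^ (-(1 / β) - 1) * (t - u) := by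
  have hC₂ : 0 < C₂ := hC₁.trans_le hC₁₂
  set S := Set.Ioc (0:ℝ) δ₀ with hSdef
  set m₀ := q δ₀ with hm₀def
  have hδ₀S : δ₀ ∈ S := ⟨hδ₀, le_refl _⟩
  have hm₀pos : 0 < m₀ := lt_of_lt_of_le (by positivity) (hq_bound δ₀ hδ₀S).1
  have hqc : ContinuousOn q S := hq_smooth.continuousOn
  have hq'neg : ∀ x ∈ S, derivWithin q S x < 0 := by
    intro x hx
    have h1 := (hq'_bound x hx).1
    have h2 : (0:ℝ) < C₁ * x ^ (-β - 1) := by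
      have := hx.1; positivity
    linarith
  -- q has an honest derivative at interior points
  have hd : ∀ x ∈ Set.Ioo (0:ℝ) δ₀, HasDerivAt q (derivWithin q S x) x := by
    intro x hx
    have hnb : S ∈ 𝓝 x := Ioc_mem_nhds hx.1 hx.2
    have hdiff := (hq_smooth.differentiableOn one_ne_zero) x (Ioo_subset_Ioc_self hx)
    rw [derivWithin_of_mem_nhds hnb]
    exact (hdiff.differentiableAt hnb).hasDerivAt
  -- strict antitonicity
  have hanti : StrictAntiOn q S := by
    apply strictAntiOn_of_deriv_neg (convex_Ioc 0 δ₀) hqc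
    intro x hx
    rw [interior_Ioc] at hx
    rw [← derivWithin_of_mem_nhds (Ioc_mem_nhds hx.1 hx.2)]
    exact hq'neg x (Ioo_subset_Ioc_self hx)
  -- surjectivity onto [m₀, ∞)
  have hsurj : ∀ t ≥ m₀, ∃ x ∈ S, q x = t := by
    intro t ht
    have htpos : 0 < t := hm₀pos.trans_le ht
    have htC : 0 < t / C₁ := div_pos htpos hC₁
    set x₁ := min δ₀ ((t / C₁) ^ (-(1/β))) with hx₁def
    have hx₁pos : 0 < x₁ := lt_min hδ₀ (Real.rpow_pos_of_pos htC _)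
    have hx₁le : x₁ ≤ δ₀ := min_le_left _ _
    have hqx₁ : t ≤ q x₁ := by
      have hx₁S : x₁ ∈ S := ⟨hx₁pos, hx₁le⟩
      have h1 := (hq_bound x₁ hx₁S).1
      have h2 : x₁ ≤ (t / C₁) ^ (-(1/β)) := min_le_right _ _
      have h3 : ((t / C₁) ^ (-(1/β))) ^ (-β) ≤ x₁ ^ (-β) :=
        Real.rpow_le_rpow_of_nonpos hx₁pos h2 (by linarith)
      have h4 : ((t / C₁) ^ (-(1/β))) ^ (-β) = t / C₁ := by
        rw [← Real.rpow_mul htC.le, show (-(1/β))*(-β) = 1 by field_simp, Real.rpow_one]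
      rw [h4] at h3
      have h5 : C₁ * (t / C₁) ≤ C₁ * x₁ ^ (-β) := mul_le_mul_of_nonneg_left h3 hC₁.le
      rw [mul_div_cancel₀ _ hC₁.ne'] at h5
      linarith
    have hmem : t ∈ Icc (q δ₀) (q x₁) := ⟨ht, hqx₁⟩
    have hsub : Icc x₁ δ₀ ⊆ S := fun y hy => ⟨hx₁pos.trans_le hy.1, hy.2⟩
    obtain ⟨x, hx, hqx⟩ := intermediate_value_Icc' hx₁le (hqc.mono hsub) hmem
    exact ⟨x, hsub hx, hqx⟩
  set qi := Function.invFunOn q S with hqidef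
  have hleft : ∀ x ∈ S, qi (q x) = x := fun x hx => hanti.injOn.leftInvOn_invFunOn hx
  have hright : ∀ t ≥ m₀, qi t ∈ S ∧ q (qi t) = t := fun t ht =>
    ⟨Function.invFunOn_mem (hsurj t ht), Function.invFunOn_eq (hsurj t ht)⟩
  -- size bounds for qi
  have hsize : ∀ t ≥ m₀, C₁ ^ (1/β) * t ^ (-(1/β)) ≤ qi t ∧ qi t ≤ C₂ ^ (1/β) * t ^ (-(1/β)) := by
    intro t ht
    obtain ⟨hxS, hqx⟩ := hright t ht
    have htpos : 0 < t := hm₀pos.trans_le ht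
    have hb := hq_bound (qi t) hxS
    rw [hqx] at hb
    exact ⟨aux_ge hβ htpos hC₁ hxS.1 hb.1, aux_le hβ htpos hC₂ hxS.1 hb.2⟩
  -- key mean value identity
  have hkey : ∀ u t : ℝ, m₀ ≤ u → u < t → ∃ c, c ∈ Ioo (qi t) (qi u) ∧ c ∈ S ∧
      qi u - qi t = (t - u) * (-(derivWithin q S c))⁻¹ := by
    intro u t hu hut
    have ht : m₀ ≤ t := hu.trans hut.le
    obtain ⟨haS, hqa⟩ := hright t ht
    obtain ⟨hbS, hqb⟩ := hright u hu
    have hab : qi t < qi u := by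
      rcases lt_trichotomy (qi t) (qi u) with h|h|h
      · exact h
      · exfalso; rw [h, hqb] at hqa; linarith
      · exfalso; have := hanti hbS haS h; rw [hqa, hqb] at this; linarith
    have hIcc : Icc (qi t) (qi u) ⊆ S := fun y hy => ⟨haS.1.trans_le hy.1, hy.2.trans hbS.2⟩
    obtain ⟨c, hc, hceq⟩ := exists_hasDerivAt_eq_slope q (fun x => derivWithin q S x) hab
      (hqc.mono hIcc)
      (fun x hx => hd x ⟨haS.1.trans hx.1, hx.2.trans_le hbS.2⟩)
    have hcS : c ∈ S := hIcc ⟨hc.1.le, hc.2.le⟩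
    have hq'c : derivWithin q S c < 0 := hq'neg c hcS
    refine ⟨c, hc, hcS, ?_⟩
    rw [hqa, hqb] at hceq
    have hba : qi u - qi t ≠ 0 := sub_ne_zero.2 hab.ne'
    have h1 : derivWithin q S c * (qi u - qi t) = u - t := by
      rw [hceq, div_mul_cancel₀ _ hba]
    rw [eq_comm, mul_inv_eq_iff_eq_mul₀ (by linarith : -(derivWithin q S c) ≠ 0)]
    linarith [h1]
  -- bounds for the inverse of -q'
  have hinv : ∀ c ∈ S, C₂⁻¹ * c ^ (β+1) ≤ (-(derivWithin q S c))⁻¹ ∧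
      (-(derivWithin q S c))⁻¹ ≤ C₁⁻¹ * c ^ (β+1) := by
    intro c hc
    obtain ⟨h1, h2⟩ := hq'_bound c hc
    have hcpos := hc.1
    have hp : 0 < c ^ (β+1) := Real.rpow_pos_of_pos hcpos _
    have hrw : c ^ (-β - 1) = (c ^ (β+1))⁻¹ := by
      rw [← Real.rpow_neg hcpos.le, show -(β+1) = -β-1 by ring]
    rw [hrw] at h1 h2
    have hA : (0:ℝ) < C₁ * (c ^ (β+1))⁻¹ := by positivity
    have hdpos : 0 < -(derivWithin q S c) := lt_of_lt_of_le hA h1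
    constructor
    · have := inv_anti₀ hdpos h2
      rwa [mul_inv, inv_inv] at this
    · have := inv_anti₀ hA h1
      rwa [mul_inv, inv_inv] at this
  -- Lipschitz bound
  set L := C₁⁻¹ * δ₀ ^ (β+1) with hLdef
  have hLpos : 0 < L := by positivity
  have hmono : ∀ u t : ℝ, m₀ ≤ u → u < t → 0 < qi u - qi t ∧ qi u - qi t ≤ L * (t - u) := by
    intro u t hu hut
    obtain ⟨c, hc, hcS, heq⟩ := hkey u t hu hut
    have hq'c : derivWithin q S c < 0 := hq'neg c hcS
    have hipos : 0 < (-(derivWithin q S c))⁻¹ := inv_pos.2 (by linarith)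
    constructor
    · rw [heq]; exact mul_pos (by linarith) hipos
    · rw [heq, mul_comm L]
      apply mul_le_mul_of_nonneg_left _ (by linarith)
      calc (-(derivWithin q S c))⁻¹ ≤ C₁⁻¹ * c ^ (β+1) := (hinv c hcS).2
        _ ≤ C₁⁻¹ * δ₀ ^ (β+1) := by
            apply mul_le_mul_of_nonneg_left _ (by positivity)
            exact Real.rpow_le_rpow hcS.1.le hcS.2 (by linarith)
  -- differentiability of qi with derivative (q' (qi t))⁻¹
  have hderiv : ∀ t₀ ≥ m₀, HasDerivWithinAt qi ((derivWithin q S (qi t₀))⁻¹) (Ici m₀) t₀ := by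
    intro t₀ ht₀
    obtain ⟨hx₀S, hqx₀⟩ := hright t₀ ht₀
    rw [hasDerivWithinAt_iff_tendsto_slope]
    have hex : ∀ t ∈ Ici m₀ \ {t₀}, ∃ c, c ∈ S ∧ |c - qi t₀| ≤ L * |t - t₀| ∧
        slope qi t₀ t = (derivWithin q S c)⁻¹ := by
      intro t htmem
      obtain ⟨htm, htne⟩ := htmem
      have htne' : t ≠ t₀ := htne
      rcases lt_or_gt_of_ne htne' with h|h
      · obtain ⟨c, hc, hcS, heq⟩ := hkey t t₀ htm h
        have hbnd := hmono t t₀ htm h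
        refine ⟨c, hcS, ?_, ?_⟩
        · rw [abs_of_pos (sub_pos.2 hc.1), abs_of_neg (sub_neg.2 h)]
          have hc2 := hc.2
          have := hbnd.2
          nlinarith
        · rw [slope_def_field, heq]
          have hq'c : derivWithin q S c ≠ 0 := (hq'neg c hcS).ne
          have htt : t - t₀ ≠ 0 := sub_ne_zero.2 htne'
          field_simp
          ring
      · obtain ⟨c, hc, hcS, heq⟩ := hkey t₀ t ht₀ h
        have hbnd := hmono t₀ t ht₀ h
        refine ⟨c, hcS, ?_, ?_⟩
        · rw [abs_of_neg (sub_neg.2 hc.2), abs_of_pos (sub_pos.2 h)]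
          have hc1 := hc.1
          have := hbnd.2
          nlinarith
        · rw [slope_def_field]
          have heq' : qi t - qi t₀ = -((t - t₀) * (-(derivWithin q S c))⁻¹) := by linarith [heq]
          rw [heq']
          have hq'c : derivWithin q S c ≠ 0 := (hq'neg c hcS).ne
          have htt : t - t₀ ≠ 0 := sub_ne_zero.2 htne'
          field_simp
    choose! c hcS hcdist hcslope using hex
    have hc_tendsto : Tendsto c (𝓝[Ici m₀ \ {t₀}] t₀) (𝓝[S] (qi t₀)) := by
      apply tendsto_nhdsWithin_of_tendsto_nhds_of_eventually_within
      · have hL0 : Tendsto (fun t => L * |t - t₀|) (𝓝[Ici m₀ \ {t₀}] t₀) (𝓝 0) := by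
          have : Tendsto (fun t : ℝ => L * |t - t₀|) (𝓝 t₀) (𝓝 (L * |t₀ - t₀|)) := by
            apply Tendsto.const_mul
            exact (continuous_abs.comp (continuous_id.sub continuous_const)).tendsto t₀
          simpa using this.mono_left nhdsWithin_le_nhds
        have hsq : Tendsto (fun t => c t - qi t₀) (𝓝[Ici m₀ \ {t₀}] t₀) (𝓝 0) := by
          apply squeeze_zero_norm' _ hL0
          exact eventually_mem_nhdsWithin.mono fun t ht => by
            simpa [Real.norm_eq_abs] using hcdist t ht
        have := hsq.add_const (qi t₀)
        simpa using this
      · exact eventually_mem_nhdsWithin.mono fun t ht => hcS t ht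
    have hcont : ContinuousWithinAt (derivWithin q S) S (qi t₀) :=
      (hq_smooth.continuousOn_derivWithin (uniqueDiffOn_Ioc 0 δ₀) le_rfl) (qi t₀) hx₀S
    have h1 : Tendsto (fun t => derivWithin q S (c t)) (𝓝[Ici m₀ \ {t₀}] t₀)
        (𝓝 (derivWithin q S (qi t₀))) := hcont.tendsto.comp hc_tendsto
    have hne : derivWithin q S (qi t₀) ≠ 0 := (hq'neg (qi t₀) hx₀S).ne
    have h2 := h1.inv₀ hne
    exact h2.congr' (eventually_mem_nhdsWithin.mono fun t ht => (hcslope t ht).symm)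
  -- the constants
  set D₁ := min (C₁ ^ (1/β)) (C₂⁻¹ * C₁ ^ ((β+1)/β)) with hD₁def
  set D₂ := max (C₂ ^ (1/β)) (C₁⁻¹ * C₂ ^ ((β+1)/β)) with hD₂def
  have hD₁pos : 0 < D₁ := lt_min (by positivity) (by positivity)
  have hD₁₂ : D₁ ≤ D₂ := le_trans (min_le_left _ _) (le_trans
    (Real.rpow_le_rpow hC₁.le hC₁₂ (by positivity)) (le_max_left _ _))
  -- abstract lower/upper bounds
  have hlow : ∀ t ≥ m₀, ∀ x : ℝ, qi t ≤ x →
      D₁ * t ^ (-(1/β)-1) ≤ C₂⁻¹ * x ^ (β+1) := by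
    intro t ht x hx
    have htpos : 0 < t := hm₀pos.trans_le ht
    have h1 : C₁ ^ (1/β) * t ^ (-(1/β)) ≤ x := le_trans (hsize t ht).1 hx
    have h0 : (0:ℝ) ≤ C₁ ^ (1/β) * t ^ (-(1/β)) := by positivity
    calc D₁ * t ^ (-(1/β)-1) ≤ (C₂⁻¹ * C₁ ^ ((β+1)/β)) * t ^ (-(1/β)-1) :=
          mul_le_mul_of_nonneg_right (min_le_right _ _) (Real.rpow_nonneg htpos.le _)
      _ = C₂⁻¹ * (C₁ ^ (1/β) * t ^ (-(1/β))) ^ (β+1) := by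
          rw [aux_pow hβ htpos hC₁]; ring
      _ ≤ C₂⁻¹ * x ^ (β+1) := by
          apply mul_le_mul_of_nonneg_left _ (by positivity)
          exact Real.rpow_le_rpow h0 h1 (by linarith)
  have hup : ∀ u ≥ m₀, ∀ x : ℝ, 0 ≤ x → x ≤ qi u →
      C₁⁻¹ * x ^ (β+1) ≤ D₂ * u ^ (-(1/β)-1) := by
    intro u hu x hx0 hx
    have hupos : 0 < u := hm₀pos.trans_le hu
    have h1 : x ≤ C₂ ^ (1/β) * u ^ (-(1/β)) := le_trans hx (hsize u hu).2
    calc C₁⁻¹ * x ^ (β+1) ≤ C₁⁻¹ * (C₂ ^ (1/β) * u ^ (-(1/β))) ^ (β+1) := by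
          apply mul_le_mul_of_nonneg_left _ (by positivity)
          exact Real.rpow_le_rpow hx0 h1 (by linarith)
      _ = (C₁⁻¹ * C₂ ^ ((β+1)/β)) * u ^ (-(1/β)-1) := by
          rw [aux_pow hβ hupos hC₂]; ring
      _ ≤ D₂ * u ^ (-(1/β)-1) :=
          mul_le_mul_of_nonneg_right (le_max_right _ _) (Real.rpow_nonneg hupos.le _)
  refine ⟨hanti, qi, hleft, hright, D₁, D₂, hD₁pos, hD₁₂, ?_, ?_⟩
  · -- pointwise bounds
    intro t ht
    have htpos : 0 < t := hm₀pos.trans_le ht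
    obtain ⟨hxS, hqx⟩ := hright t ht
    have hsz := hsize t ht
    have hDW : derivWithin qi (Ici m₀) t = (derivWithin q S (qi t))⁻¹ :=
      (hderiv t ht).derivWithin (uniqueDiffOn_Ici m₀ t ht)
    have hflip : -derivWithin qi (Ici m₀) t = (-(derivWithin q S (qi t)))⁻¹ := by
      rw [hDW, ← inv_neg]
    have hinvb := hinv (qi t) hxS
    have hlowb := hlow t ht (qi t) le_rfl
    have hupb := hup t ht (qi t) hxS.1.le le_rfl
    refine ⟨?_, ?_, ?_, ?_⟩
    · calc D₁ * t ^ (-(1/β)) ≤ C₁ ^ (1/β) * t ^ (-(1/β)) :=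
            mul_le_mul_of_nonneg_right (min_le_left _ _) (Real.rpow_nonneg htpos.le _)
        _ ≤ qi t := hsz.1
    · calc qi t ≤ C₂ ^ (1/β) * t ^ (-(1/β)) := hsz.2
        _ ≤ D₂ * t ^ (-(1/β)) :=
            mul_le_mul_of_nonneg_right (le_max_left _ _) (Real.rpow_nonneg htpos.le _)
    · rw [hflip]; exact le_trans hlowb hinvb.1
    · rw [hflip]; exact le_trans hinvb.2 hupb
  · -- mean value bounds
    intro u t hu hut
    have ht : m₀ ≤ t := hu.trans hut.le
    obtain ⟨c, hc, hcS, heq⟩ := hkey u t hu hut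
    have hinvb := hinv c hcS
    have htu : (0:ℝ) < t - u := sub_pos.2 hut
    constructor
    · have h1 : D₁ * t ^ (-(1/β)-1) ≤ (-(derivWithin q S c))⁻¹ :=
        le_trans (hlow t ht c hc.1.le) hinvb.1
      rw [heq, mul_comm (t-u)]
      exact mul_le_mul_of_nonneg_right h1 htu.le
    · have h1 : (-(derivWithin q S c))⁻¹ ≤ D₂ * u ^ (-(1/β)-1) :=
        le_trans hinvb.2 (hup u hu c hcS.1.le hc.2.le)
      rw [heq, mul_comm (t-u)]
      exact mul_le_mul_of_nonneg_right h1 htu.le
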